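/- Let p, N be positive integers, let A be a real p×N matrix with A Aᵀ invertible, set V = (A Aᵀ)⁻¹, let σ > 0 and g ∈ ℝᵖ. Let T : ℝᴺ → ℝ be square-integrable with respect to N(Aᵀγ, σ²I_N) for every γ ∈ ℝᵖ and unbiased for gᵀγ, i.e., E_{y ∼ N(Aᵀγ, σ²I_N)}[T(y)] = gᵀγ for all γ ∈ ℝᵖ. Let u : ℝᴺ → ℝ be non-negative. Then for every γ ∈ ℝᵖ and every y' ∈ ℝᴺ satisfying u(y')² < σ² gᵀ V g, one has u(y')² < Var_{y ∼ N(Aᵀγ, σ²I_N)}(T(y)). -/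

import Mathlib

set_option maxHeartbeats 2000000

open MeasureTheory Matrix Real

/-- The multivariate Gaussian measure `N(μ, σ² I_N)` on `ℝᴺ`. -/
noncomputable def gaussianPi (N : ℕ) (μ : Fin N → ℝ) (σ : ℝ) : Measure (Fin N → ℝ) :=
  volume.withDensity (fun y => ENNReal.ofReal
    ((2 * Real.pi * σ ^ 2) ^ (-(N : ℝ) / 2) *
      Real.exp (- (∑ i, (y i - μ i) ^ 2) / (2 * σ ^ 2))))

namespace Stmt11Aux

open scoped ENNReal NNReal

/-- The density of the isotropic Gaussian. -/
noncomputable def gdens (N : ℕ) (μ : Fin N → ℝ) (σ : ℝ) (y : Fin N → ℝ) : ℝ :=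
  (2 * Real.pi * σ ^ 2) ^ (-(N : ℝ) / 2) * Real.exp (- (∑ i, (y i - μ i) ^ 2) / (2 * σ ^ 2))

lemma gdens_nonneg {N μ σ} (y) : 0 ≤ gdens N μ σ y := by
  unfold gdens
  have : (0:ℝ) ≤ (2 * Real.pi * σ ^ 2) ^ (-(N : ℝ) / 2) :=
    Real.rpow_nonneg (by positivity) _
  positivity

lemma gdens_measurable {N μ σ} : Measurable (gdens N μ σ) := by
  unfold gdens
  refine measurable_const.mul (Real.measurable_exp.comp ?_)
  refine Measurable.div ?_ measurable_const
  refine Measurable.neg ?_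
  exact Finset.measurable_sum _ fun i _ =>
    ((measurable_pi_apply i).sub measurable_const).pow_const 2

lemma oneDim_integrable {σ : ℝ} (hσ : 0 < σ) (c : ℝ) :
    Integrable (fun x : ℝ => (2 * Real.pi * σ ^ 2) ^ (-(1:ℝ)/2) *
      Real.exp (-(x - c)^2 / (2*σ^2))) := by
  have hb : (0:ℝ) < (2*σ^2)⁻¹ := by positivity
  have h : ∀ x : ℝ, -(x - c)^2 / (2*σ^2) = -(2*σ^2)⁻¹ * (x - c)^2 := fun x => by
    ring
  simp_rw [h]
  exact ((integrable_exp_neg_mul_sq hb).comp_sub_right c).const_mul _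

lemma oneDim_integral {σ : ℝ} (hσ : 0 < σ) (c : ℝ) :
    ∫ x : ℝ, (2 * Real.pi * σ ^ 2) ^ (-(1:ℝ)/2) * Real.exp (-(x - c)^2 / (2*σ^2)) = 1 := by
  have hb : (0:ℝ) < (2*σ^2)⁻¹ := by positivity
  have hC : (0:ℝ) < 2 * Real.pi * σ ^ 2 := by positivity
  have h : ∀ x : ℝ, -(x - c)^2 / (2*σ^2) = -(2*σ^2)⁻¹ * (x - c)^2 := fun x => by
    ring
  simp_rw [h]
  rw [MeasureTheory.integral_const_mul,
    integral_sub_right_eq_self (fun x => Real.exp (-(2*σ^2)⁻¹ * x^2)) c,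
    integral_gaussian]
  rw [show Real.pi / (2*σ^2)⁻¹ = 2 * Real.pi * σ^2 by field_simp]
  rw [Real.sqrt_eq_rpow, ← Real.rpow_add hC]
  norm_num

lemma gdens_prod {N : ℕ} {μ : Fin N → ℝ} {σ : ℝ} (hσ : 0 < σ) :
    gdens N μ σ = fun y => ∏ i, (2 * Real.pi * σ ^ 2) ^ (-(1:ℝ)/2) *
      Real.exp (-(y i - μ i)^2 / (2*σ^2)) := by
  funext y
  have hC : (0:ℝ) < 2 * Real.pi * σ ^ 2 := by positivity
  rw [Finset.prod_mul_distrib, Finset.prod_const, ← Real.exp_sum]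
  unfold gdens
  congr 1
  · rw [← Real.rpow_natCast ((2 * Real.pi * σ ^ 2) ^ (-(1:ℝ)/2)) (Finset.univ.card),
      ← Real.rpow_mul hC.le]
    simp [Finset.card_univ]
    ring_nf
  · congr 1
    rw [← Finset.sum_div, Finset.sum_neg_distrib]

lemma gdens_integrable {N : ℕ} {μ : Fin N → ℝ} {σ : ℝ} (hσ : 0 < σ) :
    Integrable (gdens N μ σ) := by
  rw [gdens_prod hσ]
  exact Integrable.fintype_prod (𝕜 := ℝ)
    (f := fun i x => (2 * Real.pi * σ ^ 2) ^ (-(1:ℝ)/2) * Real.exp (-(x - μ i)^2 / (2*σ^2)))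
    (fun i => oneDim_integrable hσ (μ i))

lemma gdens_integral {N : ℕ} {μ : Fin N → ℝ} {σ : ℝ} (hσ : 0 < σ) :
    ∫ y, gdens N μ σ y = 1 := by
  rw [gdens_prod hσ]
  beta_reduce
  rw [volume_pi]
  rw [integral_fintype_prod_eq_prod
    (f := fun i x => (2 * Real.pi * σ ^ 2) ^ (-(1:ℝ)/2) * Real.exp (-(x - μ i)^2 / (2*σ^2)))]
  simp [oneDim_integral hσ]

lemma gaussianPi_eq (N μ σ) :
    gaussianPi N μ σ = volume.withDensity
      (fun y => (((Real.toNNReal (gdens N μ σ y)) : ℝ≥0) : ℝ≥0∞)) := rfl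

lemma gaussianPi_isProb {N : ℕ} {μ : Fin N → ℝ} {σ : ℝ} (hσ : 0 < σ) :
    IsProbabilityMeasure (gaussianPi N μ σ) := by
  constructor
  rw [gaussianPi_eq, withDensity_apply _ MeasurableSet.univ, setLIntegral_univ]
  have : ∀ y, (((Real.toNNReal (gdens N μ σ y)) : ℝ≥0) : ℝ≥0∞)
      = ENNReal.ofReal (gdens N μ σ y) := fun y => rfl
  simp_rw [this]
  rw [← ofReal_integral_eq_lintegral_ofReal (gdens_integrable hσ)
    (Filter.Eventually.of_forall gdens_nonneg), gdens_integral hσ, ENNReal.ofReal_one]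

lemma integral_gaussianPi {N : ℕ} {μ : Fin N → ℝ} {σ : ℝ} (f : (Fin N → ℝ) → ℝ) :
    ∫ y, f y ∂(gaussianPi N μ σ) = ∫ y, gdens N μ σ y * f y := by
  rw [gaussianPi_eq, integral_withDensity_eq_integral_smul
    (Measurable.real_toNNReal gdens_measurable) f]
  congr 1
  funext y
  rw [NNReal.smul_def, smul_eq_mul, Real.coe_toNNReal _ (gdens_nonneg y)]

lemma integrable_gaussianPi_iff {N : ℕ} {μ : Fin N → ℝ} {σ : ℝ} (f : (Fin N → ℝ) → ℝ) :
    Integrable f (gaussianPi N μ σ) ↔ Integrable (fun y => gdens N μ σ y * f y) volume := by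
  rw [gaussianPi_eq, integrable_withDensity_iff_integrable_smul
    (Measurable.real_toNNReal gdens_measurable)]
  constructor <;> intro h <;>
  · refine h.congr (Filter.Eventually.of_forall fun y => ?_)
    simp only [NNReal.smul_def, smul_eq_mul, Real.coe_toNNReal _ (gdens_nonneg y)]

lemma cs_sq {α : Type*} [MeasurableSpace α] {μ : Measure α} {f g : α → ℝ}
    (hf : MemLp f 2 μ) (hg : MemLp g 2 μ) :
    (∫ a, f a * g a ∂μ)^2 ≤ (∫ a, f a ^ 2 ∂μ) * (∫ a, g a ^ 2 ∂μ) := by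
  have h2 : ENNReal.ofReal (2:ℝ) = 2 := by simp
  have hpq : Real.HolderConjugate 2 2 := Real.HolderConjugate.two_two
  have key := integral_mul_norm_le_Lp_mul_Lq (μ := μ) hpq (h2 ▸ hf) (h2 ▸ hg)
  have hnf : ∀ a, ‖f a‖ ^ (2:ℝ) = f a ^ 2 := fun a => by
    rw [show (2:ℝ) = ((2:ℕ):ℝ) by norm_num, Real.rpow_natCast, Real.norm_eq_abs, sq_abs]
  have hng : ∀ a, ‖g a‖ ^ (2:ℝ) = g a ^ 2 := fun a => by
    rw [show (2:ℝ) = ((2:ℕ):ℝ) by norm_num, Real.rpow_natCast, Real.norm_eq_abs, sq_abs]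
  simp_rw [hnf, hng] at key
  have h1 : ‖∫ a, f a * g a ∂μ‖ ≤ ∫ a, ‖f a‖ * ‖g a‖ ∂μ := by
    refine (norm_integral_le_integral_norm (fun a => f a * g a)).trans (le_of_eq ?_)
    exact integral_congr_ae (Filter.Eventually.of_forall fun a => by simp [abs_mul])
  have hF : (0:ℝ) ≤ ∫ a, f a ^ 2 ∂μ := integral_nonneg fun a => sq_nonneg _
  have hG : (0:ℝ) ≤ ∫ a, g a ^ 2 ∂μ := integral_nonneg fun a => sq_nonneg _
  have hhalf : ∀ Z : ℝ, 0 ≤ Z → (Z ^ ((1:ℝ)/2)) ^ 2 = Z := fun Z hZ => by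
    rw [← Real.rpow_natCast (Z ^ ((1:ℝ)/2)) 2, ← Real.rpow_mul hZ]
    norm_num
  calc (∫ a, f a * g a ∂μ)^2 = ‖∫ a, f a * g a ∂μ‖^2 := by rw [Real.norm_eq_abs, sq_abs]
    _ ≤ (∫ a, ‖f a‖ * ‖g a‖ ∂μ)^2 := by
        apply pow_le_pow_left₀ (norm_nonneg _) h1
    _ ≤ ((∫ a, f a ^ 2 ∂μ) ^ ((1:ℝ)/2) * (∫ a, g a ^ 2 ∂μ) ^ ((1:ℝ)/2))^2 := by
        apply pow_le_pow_left₀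
          (integral_nonneg fun a => mul_nonneg (norm_nonneg _) (norm_nonneg _))
        exact key
    _ = (∫ a, f a ^ 2 ∂μ) * (∫ a, g a ^ 2 ∂μ) := by
        rw [mul_pow, hhalf _ hF, hhalf _ hG]

lemma memL2_mul_integrable {α : Type*} [MeasurableSpace α] {μ : Measure α} {f g : α → ℝ}
    (hf : MemLp f 2 μ) (hg : MemLp g 2 μ) :
    Integrable (fun a => f a * g a) μ := by
  have h : MemLp (f • g) 1 μ :=
    MemLp.smul hg hf
  rw [show f • g = fun a => f a * g a from rfl] at h
  exact memLp_one_iff_integrable.mp h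

lemma sum_sub_sq {N : ℕ} (a b : Fin N → ℝ) :
    ∑ i, (a i - b i)^2 = ∑ i, (a i)^2 - 2 * ∑ i, a i * b i + ∑ i, (b i)^2 := by
  rw [Finset.mul_sum, ← Finset.sum_sub_distrib, ← Finset.sum_add_distrib]
  exact Finset.sum_congr rfl fun i _ => by ring

private lemma expfact1 (C e1 e2 e3 : ℝ) (h : e2 = e1 + e3) :
    C * Real.exp e2 = Real.exp e1 * (C * Real.exp e3) := by
  rw [h, Real.exp_add]; ring

private lemma expfact2 (C e1 e2 e3 e4 : ℝ) (h : e1 + e1 + e2 = e3 + e4) :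
    Real.exp e1 ^ 2 * (C * Real.exp e2) = Real.exp e3 * (C * Real.exp e4) := by
  rw [sq]
  calc Real.exp e1 * Real.exp e1 * (C * Real.exp e2) = C * Real.exp (e1 + e1 + e2) := by
        rw [Real.exp_add, Real.exp_add]; ring
    _ = C * (Real.exp e3 * Real.exp e4) := by rw [h, Real.exp_add]
    _ = Real.exp e3 * (C * Real.exp e4) := by ring

section
variable {N : ℕ} {σ : ℝ} (μ0 d : Fin N → ℝ)

lemma ratio_id (hσ : 0 < σ) (y : Fin N → ℝ) :
    gdens N (fun i => μ0 i + d i) σ y =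
      Real.exp ((2 * (∑ i, (y i - μ0 i) * d i) - ∑ i, d i ^ 2) / (2 * σ ^ 2)) *
        gdens N μ0 σ y := by
  have hσ2 : σ ^ 2 ≠ 0 := by positivity
  have hs : ∑ i, (y i - (μ0 i + d i))^2
      = ∑ i, (y i - μ0 i)^2 - 2 * ∑ i, (y i - μ0 i) * d i + ∑ i, d i ^ 2 := by
    rw [show ∑ i, (y i - (μ0 i + d i))^2 = ∑ i, ((y i - μ0 i) - d i)^2 from
      Finset.sum_congr rfl fun i _ => by ring]
    exact sum_sub_sq (fun i => y i - μ0 i) d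
  unfold gdens
  rw [hs]
  apply expfact1
  set Sv := ∑ i, (y i - μ0 i)^2
  set Bv := ∑ i, (y i - μ0 i) * d i
  set Dv := ∑ i, d i ^ 2
  field_simp
  ring

lemma ratio_sq_id (hσ : 0 < σ) (y : Fin N → ℝ) :
    Real.exp ((2 * (∑ i, (y i - μ0 i) * d i) - ∑ i, d i ^ 2) / (2 * σ ^ 2)) ^ 2 *
        gdens N μ0 σ y =
      Real.exp ((∑ i, d i ^ 2) / σ ^ 2) * gdens N (fun i => μ0 i + 2 * d i) σ y := by
  have hσ2 : σ ^ 2 ≠ 0 := by positivity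
  have e1 : ∑ i, (y i - μ0 i) * (2 * d i) = 2 * ∑ i, (y i - μ0 i) * d i := by
    rw [Finset.mul_sum]; exact Finset.sum_congr rfl fun i _ => by ring
  have e2 : ∑ i, (2 * d i)^2 = 4 * ∑ i, d i ^ 2 := by
    rw [Finset.mul_sum]; exact Finset.sum_congr rfl fun i _ => by ring
  have hs : ∑ i, (y i - (μ0 i + 2 * d i))^2
      = ∑ i, (y i - μ0 i)^2 - 2 * (2 * ∑ i, (y i - μ0 i) * d i) + 4 * ∑ i, d i ^ 2 := by
    rw [show ∑ i, (y i - (μ0 i + 2 * d i))^2 = ∑ i, ((y i - μ0 i) - 2 * d i)^2 from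
      Finset.sum_congr rfl fun i _ => by ring]
    rw [sum_sub_sq (fun i => y i - μ0 i) (fun i => 2 * d i), e1, e2]
  unfold gdens
  rw [hs]
  apply expfact2
  set Sv := ∑ i, (y i - μ0 i)^2
  set Bv := ∑ i, (y i - μ0 i) * d i
  set Dv := ∑ i, d i ^ 2
  field_simp
  ring

end

end Stmt11Aux

open Stmt11Aux

/-- If an unbiased estimator reports an uncertainty smaller than that of the
anchor model, then that uncertainty is smaller than the estimator's sampling
standard deviation. -/
theorem stmt11 (p N : ℕ) (hp : 0 < p) (hN : 0 < N)
    (A : Matrix (Fin p) (Fin N) ℝ) (hA : IsUnit (A * Aᵀ).det)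
    (V : Matrix (Fin p) (Fin p) ℝ) (hV : V = (A * Aᵀ)⁻¹)
    (σ : ℝ) (hσ : 0 < σ) (g : Fin p → ℝ)
    (T : (Fin N → ℝ) → ℝ)
    (hT : ∀ γ : Fin p → ℝ, MemLp T 2 (gaussianPi N (Aᵀ.mulVec γ) σ))
    (hunbiased : ∀ γ : Fin p → ℝ,
      ∫ y, T y ∂(gaussianPi N (Aᵀ.mulVec γ) σ) = g ⬝ᵥ γ)
    (u : (Fin N → ℝ) → ℝ) (hu : ∀ y, 0 ≤ u y) :
    ∀ (γ : Fin p → ℝ) (y' : Fin N → ℝ),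
      u y' ^ 2 < σ ^ 2 * (g ⬝ᵥ V.mulVec g) →
      u y' ^ 2 < ProbabilityTheory.variance T (gaussianPi N (Aᵀ.mulVec γ) σ) := by
  intro γ y' hlt
  have hσ2 : (0:ℝ) < σ^2 := by positivity
  set q : ℝ := g ⬝ᵥ V.mulVec g with hqdef
  set μ0 : Fin N → ℝ := Aᵀ.mulVec γ with hμ0
  set P : Measure (Fin N → ℝ) := gaussianPi N μ0 σ with hP
  haveI hPprob : IsProbabilityMeasure P := gaussianPi_isProb hσ
  have hq0 : 0 < q := by nlinarith [sq_nonneg (u y')]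
  have hTm : MemLp T 2 P := hT γ
  set m : ℝ := ∫ y, T y ∂P with hm
  have hm_eq : m = g ⬝ᵥ γ := hunbiased γ
  set W : ℝ := ProbabilityTheory.variance T P with hW
  have hVar : W = ∫ y, (T y - m)^2 ∂P := by
    rw [hW, ProbabilityTheory.variance_eq_integral hTm.aestronglyMeasurable.aemeasurable]
  have hW0 : 0 ≤ W := ProbabilityTheory.variance_nonneg _ _
  -- Chapman–Robbins style bound, for every t
  have key : ∀ t : ℝ, (t * q)^2 ≤ W * (Real.exp (t^2 * q / σ^2) - 1) := by
    intro t
    set δ : Fin p → ℝ := t • V.mulVec g with hδ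
    set d : Fin N → ℝ := Aᵀ.mulVec δ with hd
    have hD : ∑ i, d i ^ 2 = t^2 * q := by
      have h1 : ∑ i, d i ^ 2 = d ⬝ᵥ d := by simp [dotProduct, sq]
      rw [h1, hd, hδ, hqdef, hV, dotProduct_mulVec, vecMul_transpose, mulVec_smul,
        mulVec_mulVec, mulVec_smul, mulVec_mulVec, ← Matrix.mul_assoc,
        Matrix.mul_nonsing_inv _ hA, one_mulVec, smul_dotProduct, dotProduct_smul,
        smul_eq_mul, smul_eq_mul, dotProduct_comm]
      ring
    have hgδ : g ⬝ᵥ δ = t * q := by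
      rw [hδ, dotProduct_smul, smul_eq_mul, hqdef]
    have hμ1 : Aᵀ.mulVec (γ + δ) = fun i => μ0 i + d i := by
      funext i
      rw [Matrix.mulVec_add]
      simp [hμ0, hd]
    set L : (Fin N → ℝ) → ℝ := fun y =>
      Real.exp ((2 * (∑ i, (y i - μ0 i) * d i) - ∑ i, d i ^ 2) / (2 * σ ^ 2)) with hL
    have hLmeas : Measurable L := by
      rw [hL]
      refine Real.measurable_exp.comp (Measurable.div ?_ measurable_const)
      refine Measurable.sub (Measurable.const_mul ?_ 2) measurable_const
      exact Finset.measurable_sum _ fun i _ =>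
        ((measurable_pi_apply i).sub measurable_const).mul_const _
    have hIL : ∫ y, L y ∂P = 1 := by
      rw [hP, integral_gaussianPi]
      have hpt : ∀ y, gdens N μ0 σ y * L y = gdens N (fun i => μ0 i + d i) σ y := fun y => by
        rw [ratio_id μ0 d hσ y]; simp only [hL]; ring
      rw [show (fun y => gdens N μ0 σ y * L y) = gdens N (fun i => μ0 i + d i) σ from
        funext hpt] at *
      exact gdens_integral hσ
    have hpt2 : ∀ y, gdens N μ0 σ y * L y ^ 2
        = Real.exp ((∑ i, d i ^ 2) / σ^2) * gdens N (fun i => μ0 i + 2 * d i) σ y := fun y => by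
      rw [← ratio_sq_id μ0 d hσ y]; simp only [hL]; ring
    have hIL2 : ∫ y, L y ^ 2 ∂P = Real.exp (t^2 * q / σ^2) := by
      rw [hP, integral_gaussianPi]
      rw [show (fun y => gdens N μ0 σ y * L y ^ 2)
          = fun y => Real.exp ((∑ i, d i ^ 2) / σ^2) * gdens N (fun i => μ0 i + 2 * d i) σ y from
        funext hpt2]
      rw [MeasureTheory.integral_const_mul, gdens_integral hσ, mul_one, hD]
    have hL2int : Integrable (fun y => L y ^ 2) P := by
      rw [hP, integrable_gaussianPi_iff]
      rw [show (fun y => gdens N μ0 σ y * L y ^ 2)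
          = fun y => Real.exp ((∑ i, d i ^ 2) / σ^2) * gdens N (fun i => μ0 i + 2 * d i) σ y from
        funext hpt2]
      exact (gdens_integrable hσ).const_mul _
    have hLM : MemLp L 2 P := by
      rw [memLp_two_iff_integrable_sq hLmeas.aestronglyMeasurable]
      exact hL2int
    have hLint : Integrable L P := hLM.integrable one_le_two
    have hTint : Integrable T P := hTm.integrable one_le_two
    have hTLint : Integrable (fun y => T y * L y) P := memL2_mul_integrable hTm hLM
    have hITL : ∫ y, T y * L y ∂P = g ⬝ᵥ γ + t * q := by
      have h1 : ∫ y, T y * L y ∂P = ∫ y, T y ∂(gaussianPi N (Aᵀ.mulVec (γ + δ)) σ) := by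
        rw [hP, integral_gaussianPi, integral_gaussianPi]
        refine integral_congr_ae (Filter.Eventually.of_forall fun y => ?_)
        show gdens N μ0 σ y * (T y * L y) = gdens N (Aᵀ.mulVec (γ + δ)) σ y * T y
        rw [hμ1, ratio_id μ0 d hσ y]
        simp only [hL]
        ring
      rw [h1, hunbiased (γ + δ), dotProduct_add, hgδ]
    have hE : ∫ y, (T y - m) * (L y - 1) ∂P = t * q := by
      have hexpand : (fun y => (T y - m) * (L y - 1))
          = fun y => T y * L y - T y - m * L y + m := funext fun y => by ring
      rw [hexpand]
      have i1 : Integrable (fun y => T y * L y - T y) P := hTLint.sub hTint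
      have i2 : Integrable (fun y => m * L y) P := hLint.const_mul m
      have i3 : Integrable (fun y => T y * L y - T y - m * L y) P := i1.sub i2
      rw [integral_add i3 (integrable_const m), integral_sub i1 i2,
        integral_sub hTLint hTint, MeasureTheory.integral_const_mul, hITL, hIL, ← hm]
      simp [hm_eq]
    have hTmM : MemLp (fun y => T y - m) 2 P := hTm.sub (memLp_const m)
    have hLmM : MemLp (fun y => L y - 1) 2 P := hLM.sub (memLp_const 1)
    have hCS := cs_sq hTmM hLmM
    have hIL1 : ∫ y, (L y - 1)^2 ∂P = Real.exp (t^2 * q / σ^2) - 1 := by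
      have hexpand : (fun y => (L y - 1)^2) = fun y => L y ^ 2 - 2 * L y + 1 :=
        funext fun y => by ring
      rw [hexpand]
      have i4 : Integrable (fun y => 2 * L y) P := hLint.const_mul 2
      have i5 : Integrable (fun y => L y ^ 2 - 2 * L y) P := hL2int.sub i4
      rw [integral_add i5 (integrable_const 1), integral_sub hL2int i4,
        MeasureTheory.integral_const_mul, hIL2, hIL]
      simp
      ring
    rw [hE, hIL1, ← hVar] at hCS
    exact hCS
  -- numerical endgame
  set ε : ℝ := (σ^2*q - u y'^2)/(σ^2*q) with hε
  have hε0 : 0 < ε := div_pos (by linarith) (by positivity)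
  set s : ℝ := min (ε/2) (1/2) with hs
  have hs0 : 0 < s := lt_min (by linarith) (by norm_num)
  have hs1 : s ≤ 1/2 := min_le_right _ _
  have hsl1 : s < 1 := by linarith
  have hsε : s < ε := lt_of_le_of_lt (min_le_left _ _) (by linarith)
  set t : ℝ := σ * Real.sqrt (s/q) with ht
  have ht2 : t^2 = σ^2 * s / q := by
    rw [ht, mul_pow, Real.sq_sqrt (by positivity : (0:ℝ) ≤ s/q)]
    ring
  have harg : t^2 * q / σ^2 = s := by
    rw [ht2]; field_simp
  have htq : (t*q)^2 = σ^2 * s * q := by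
    rw [mul_pow, ht2]; field_simp
  have hkey := key t
  rw [harg, htq] at hkey
  have hexp : Real.exp s - 1 ≤ s / (1 - s) := by
    have h1 : 1 - s ≤ Real.exp (-s) := by
      have := Real.add_one_le_exp (-s); linarith
    have h2 : (1 - s) * Real.exp s ≤ 1 := by
      have h3 := mul_le_mul_of_nonneg_right h1 (Real.exp_pos s).le
      rwa [← Real.exp_add, neg_add_cancel, Real.exp_zero] at h3
    rw [le_div_iff₀ (by linarith : (0:ℝ) < 1 - s)]
    nlinarith [h2]
  have hchain : σ^2 * s * q ≤ W * (s/(1-s)) :=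
    hkey.trans (mul_le_mul_of_nonneg_left hexp hW0)
  have hfin : σ^2 * q * (1 - s) ≤ W := by
    have h3 : σ^2 * s * q * (1-s) ≤ W * s := by
      have h4 := mul_le_mul_of_nonneg_right hchain (by linarith : (0:ℝ) ≤ 1 - s)
      have h1s : (1:ℝ) - s ≠ 0 := by linarith
      have h5 : W * (s/(1-s)) * (1-s) = W * s := by
        rw [mul_assoc, div_mul_cancel₀ _ h1s]
      linarith [h4, h5.le, h5.ge]
    nlinarith [h3, hs0]
  have hu2 : u y' ^ 2 = σ^2 * q * (1 - ε) := by
    rw [hε]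
    field_simp
    ring
  nlinarith [hfin, hu2, hsε, hq0, hσ2, mul_pos hσ2 hq0]
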